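/- Let T be a densely defined closed operator from H1 to H2 that is absolutely minimum attaining. Then the range R(T) of T is closed in H2. -/

import Mathlib

variable {H₁ H₂ : Type*} [NormedAddCommGroup H₁] [InnerProductSpace ℂ H₁] [CompleteSpace H₁]
  [NormedAddCommGroup H₂] [InnerProductSpace ℂ H₂] [CompleteSpace H₂]

/-- The minimum modulus of the restriction of `T` to a set `M`:
`m(T|_M) = inf {‖Tx‖ : x ∈ D(T) ∩ M, ‖x‖ = 1}`. -/
noncomputable def minModOn (T : H₁ →ₗ.[ℂ] H₂) (M : Set H₁) : ℝ :=
  sInf {r : ℝ | ∃ x : T.domain, (x : H₁) ∈ M ∧ ‖(x : H₁)‖ = 1 ∧ r = ‖T x‖}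

/-- `T` is absolutely minimum attaining: the restriction of `T` to every nonzero closed
subspace `M` attains its minimum modulus. -/
def AbsMinAttains (T : H₁ →ₗ.[ℂ] H₂) : Prop :=
  ∀ M : Submodule ℂ H₁, IsClosed (M : Set H₁) → M ≠ ⊥ →
    ∃ x : T.domain, (x : H₁) ∈ M ∧ ‖(x : H₁)‖ = 1 ∧ ‖T x‖ = minModOn T (M : Set H₁)

/-- A densely defined closed absolutely minimum attaining operator has closed range. -/
theorem isClosed_range_of_absMinAttains (T : H₁ →ₗ.[ℂ] H₂)
    (hdense : Dense (T.domain : Set H₁)) (hclosed : T.IsClosed) (hAM : AbsMinAttains T) :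
    IsClosed (Set.range fun x : T.domain => T x) := by
  classical
  -- the kernel of T, viewed as a submodule of H₁
  set N : Submodule ℂ H₁ := (LinearMap.ker T.toFun).map T.domain.subtype with hN
  have hmemN : ∀ x : T.domain, (x : H₁) ∈ N ↔ T x = 0 := by
    intro x
    constructor
    · rintro ⟨z, hz, hzx⟩
      have : z = x := Subtype.ext hzx
      rw [← this]; exact hz
    · intro h; exact ⟨x, h, rfl⟩
  -- N is closed since T is a closed operator
  have hNclosed : IsClosed (N : Set H₁) := by
    rw [← isSeqClosed_iff_isClosed]
    intro u x hu hux
    have key : ∀ n, ((u n, (0 : H₂)) : H₁ × H₂) ∈ T.graph := by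
      intro n
      obtain ⟨z, hz, hzx⟩ := hu n
      rw [LinearPMap.mem_graph_iff]
      exact ⟨z, hzx, hz⟩
    have hlim : Filter.Tendsto (fun n => ((u n, (0 : H₂)) : H₁ × H₂)) Filter.atTop
        (nhds (x, 0)) := hux.prodMk_nhds tendsto_const_nhds
    have hxg : ((x, (0 : H₂)) : H₁ × H₂) ∈ T.graph :=
      hclosed.isSeqClosed key hlim
    rw [LinearPMap.mem_graph_iff] at hxg
    obtain ⟨z, hz1, hz2⟩ := hxg
    exact ⟨z, hz2, hz1⟩
  haveI : CompleteSpace N := hNclosed.completeSpace_coe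
  by_cases hM : Nᗮ = ⊥
  · -- kernel is everything; range is {0}
    have hNtop : N = ⊤ := Submodule.orthogonal_eq_bot_iff.mp hM
    have : (Set.range fun x : T.domain => T x) = {0} := by
      apply Set.eq_singleton_iff_unique_mem.mpr
      constructor
      · exact ⟨0, map_zero _⟩
      · rintro y ⟨x, rfl⟩
        exact (hmemN x).mp (hNtop ▸ Submodule.mem_top)
    rw [this]; exact isClosed_singleton
  · -- apply the AM property to M = Nᗮ
    obtain ⟨x₀, hx₀M, hx₀n, hx₀m⟩ := hAM Nᗮ (Submodule.isClosed_orthogonal N) hM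
    set m : ℝ := minModOn T (Nᗮ : Set H₁) with hm
    have hbdd : BddBelow {r : ℝ | ∃ x : T.domain, (x : H₁) ∈ (Nᗮ : Set H₁) ∧
        ‖(x : H₁)‖ = 1 ∧ r = ‖T x‖} := by
      refine ⟨0, ?_⟩
      rintro r ⟨x, -, -, rfl⟩
      exact norm_nonneg _
    have hmpos : 0 < m := by
      rcases lt_or_eq_of_le (hx₀m ▸ norm_nonneg (T x₀) : (0:ℝ) ≤ m) with h | h
      · exact h
      · exfalso
        have hTx₀ : ‖T x₀‖ = 0 := hx₀m.trans h.symm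
        have : T x₀ = 0 := norm_eq_zero.mp hTx₀
        have hx₀N : (x₀ : H₁) ∈ N := (hmemN x₀).mpr this
        have : (x₀ : H₁) = 0 := by
          have h0 : (inner ℂ ((x₀ : H₁)) ((x₀ : H₁)) : ℂ) = 0 :=
            (Submodule.mem_orthogonal N (x₀ : H₁)).mp hx₀M _ hx₀N
          exact inner_self_eq_zero.mp h0
        rw [this] at hx₀n; simp at hx₀n
    -- lower bound m ‖x‖ ≤ ‖T x‖ on D(T) ∩ Nᗮ
    have hlb : ∀ x : T.domain, (x : H₁) ∈ Nᗮ → m * ‖(x : H₁)‖ ≤ ‖T x‖ := by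
      intro x hx
      by_cases hx0 : (x : H₁) = 0
      · have : x = 0 := Subtype.ext hx0
        simp [this, hx0]
      · have hnx : ‖(x : H₁)‖ ≠ 0 := norm_ne_zero_iff.mpr hx0
        set u : T.domain := ((‖(x : H₁)‖ : ℂ)⁻¹) • x with hu
        have hucoe : (u : H₁) = ((‖(x : H₁)‖ : ℂ)⁻¹) • (x : H₁) := rfl
        have huM : (u : H₁) ∈ Nᗮ := by
          rw [hucoe]; exact Submodule.smul_mem _ _ hx
        have hun : ‖(u : H₁)‖ = 1 := by
          rw [hucoe, norm_smul]
          simp [hnx]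
        have hmem : ‖T u‖ ∈ {r : ℝ | ∃ x : T.domain, (x : H₁) ∈ (Nᗮ : Set H₁) ∧
            ‖(x : H₁)‖ = 1 ∧ r = ‖T x‖} := ⟨u, huM, hun, rfl⟩
        have hle : m ≤ ‖T u‖ := csInf_le hbdd hmem
        have hTu : ‖T u‖ = ‖(x : H₁)‖⁻¹ * ‖T x‖ := by
          rw [hu, T.map_smul, norm_smul]
          simp
        rw [hTu] at hle
        calc m * ‖(x : H₁)‖ ≤ (‖(x : H₁)‖⁻¹ * ‖T x‖) * ‖(x : H₁)‖ := by
              apply mul_le_mul_of_nonneg_right hle (norm_nonneg _)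
          _ = ‖T x‖ := by field_simp
    -- now show the range is closed
    rw [← isSeqClosed_iff_isClosed]
    intro g y hg hgy
    choose xseq hxseq using hg
    -- project away the kernel part
    set p : ℕ → T.domain := fun n =>
      ⟨(N.orthogonalProjectionOnto ((xseq n : H₁)) : H₁), by
        obtain ⟨z, hz, hzeq⟩ := (N.orthogonalProjectionOnto ((xseq n : H₁))).2
        rw [← hzeq]; exact z.2⟩ with hp
    have hpN : ∀ n, ((p n : T.domain) : H₁) ∈ N := fun n =>
      (N.orthogonalProjectionOnto ((xseq n : H₁))).2
    set u : ℕ → T.domain := fun n => xseq n - p n with hudef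
    have huM : ∀ n, ((u n : T.domain) : H₁) ∈ Nᗮ := by
      intro n
      have : ((u n : T.domain) : H₁) =
          (xseq n : H₁) - (N.orthogonalProjectionOnto ((xseq n : H₁)) : H₁) := rfl
      rw [this]
      exact N.sub_starProjection_mem_orthogonal _
    have hTp : ∀ n, T (p n) = 0 := fun n => (hmemN (p n)).mp (hpN n)
    have hTu : ∀ n, T (u n) = g n := by
      intro n
      have : u n = xseq n - p n := rfl
      rw [this, T.map_sub, hTp n, sub_zero]
      exact hxseq n
    -- u is Cauchy
    have hgc : CauchySeq g := hgy.cauchySeq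
    have hucauchy : CauchySeq (fun n => ((u n : T.domain) : H₁)) := by
      rw [Metric.cauchySeq_iff] at hgc ⊢
      intro ε hε
      obtain ⟨K, hK⟩ := hgc (m * ε) (mul_pos hmpos hε)
      refine ⟨K, fun i hi j hj => ?_⟩
      have hdiffM : ((u i - u j : T.domain) : H₁) ∈ Nᗮ := by
        have : ((u i - u j : T.domain) : H₁) = ((u i : T.domain) : H₁) - ((u j : T.domain) : H₁) := rfl
        rw [this]; exact Submodule.sub_mem _ (huM i) (huM j)
      have h1 : m * ‖((u i - u j : T.domain) : H₁)‖ ≤ ‖T (u i - u j)‖ := hlb _ hdiffM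
      have h2 : T (u i - u j) = g i - g j := by rw [T.map_sub, hTu, hTu]
      rw [h2] at h1
      have h3 : ‖g i - g j‖ < m * ε := by
        have := hK i hi j hj
        rwa [dist_eq_norm] at this
      have h4 : m * ‖((u i - u j : T.domain) : H₁)‖ < m * ε := lt_of_le_of_lt h1 h3
      have h5 : ‖((u i - u j : T.domain) : H₁)‖ < ε :=
        lt_of_mul_lt_mul_left h4 (le_of_lt hmpos)
      rw [dist_eq_norm]
      have : ((u i : T.domain) : H₁) - ((u j : T.domain) : H₁) = ((u i - u j : T.domain) : H₁) := rfl
      rw [this]; exact h5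
    obtain ⟨x, hx⟩ := cauchySeq_tendsto_of_complete hucauchy
    -- use closedness of the graph
    have hgraph : ∀ n, (((u n : T.domain) : H₁), g n) ∈ T.graph := by
      intro n
      rw [LinearPMap.mem_graph_iff]
      exact ⟨u n, rfl, hTu n⟩
    have hlim : Filter.Tendsto (fun n => ((((u n : T.domain) : H₁)), g n)) Filter.atTop
        (nhds (x, y)) := hx.prodMk_nhds hgy
    have hxy : ((x, y) : H₁ × H₂) ∈ T.graph := hclosed.isSeqClosed hgraph hlim
    rw [LinearPMap.mem_graph_iff] at hxy
    obtain ⟨z, -, hz2⟩ := hxy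
    exact ⟨z, hz2⟩
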